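/- Let k be an algebraically closed field of characteristic p > 0 and let a = (a_n), b = (b_n) be digit sequences. Then there exist units u_n of the subring k((t))^{p^n} ⊆ k((t)) with t^{a_n p^n} = u_n · t^{b_n p^n} · u_{n+1}⁻¹ in k((t)) for all n ≥ 0 if and only if the difference of p-adic integers ∑_{n≥0} a_n p^n − ∑_{n≥0} b_n p^n lies in ℤ ⊆ ℤ_p; equivalently, if and only if there exists m ∈ ℤ such that ∑_{n<N} (a_n − b_n) p^n ≡ m (mod p^N) for every N ≥ 0. (Together with the existence of monomial representatives, this identifies the group of isomorphism classes of stratified line bundles on k((t)), i.e., R¹lim_n 𝔾_m(k((t))^{p^n}), with ℤ_p/ℤ.) -/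

import Mathlib

/-- The element `t` of `k((t))`. -/
noncomputable def tt (k : Type*) [Field k] : LaurentSeries k := HahnSeries.single 1 1

/-- `f ∈ k((t))` lies in the subring `k((t))^{pⁿ}` of `pⁿ`-th powers: since `k` is
perfect, this means exactly that the support of `f` consists of multiples of `pⁿ`. -/
def InLaurentSeriesPow (k : Type*) [Field k] (p n : ℕ) (f : LaurentSeries k) : Prop :=
  ∀ i ∈ f.support, ((p : ℤ) ^ n) ∣ i

/-- `f` is a unit of the subring `k((t))^{pⁿ}`. -/
def IsUnitLaurentSeriesPow (k : Type*) [Field k] (p n : ℕ) (f : LaurentSeries k) : Prop :=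
  InLaurentSeriesPow k p n f ∧ ∃ g, InLaurentSeriesPow k p n g ∧ f * g = 1

lemma tt_pow (k : Type*) [Field k] (m : ℕ) :
    (tt k) ^ m = HahnSeries.single (m : ℤ) (1 : k) := by
  rw [tt, HahnSeries.single_pow, one_pow, nsmul_eq_mul, mul_one]

lemma single_inv (k : Type*) [Field k] (e : ℤ) :
    (HahnSeries.single e (1 : k) : LaurentSeries k)⁻¹ = HahnSeries.single (-e) (1 : k) := by
  refine inv_eq_of_mul_eq_one_right ?_
  rw [HahnSeries.single_mul_single, add_neg_cancel, one_mul, HahnSeries.single_zero_one]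

lemma single_unit (k : Type*) [Field k] (p n : ℕ) (e : ℤ) (he : ((p : ℤ) ^ n) ∣ e) :
    IsUnitLaurentSeriesPow k p n (HahnSeries.single e (1 : k)) := by
  constructor
  · intro i hi
    rw [HahnSeries.support_single_of_ne (one_ne_zero), Set.mem_singleton_iff] at hi
    subst hi; exact he
  · refine ⟨HahnSeries.single (-e) (1 : k), ?_, ?_⟩
    · intro i hi
      rw [HahnSeries.support_single_of_ne (one_ne_zero), Set.mem_singleton_iff] at hi
      subst hi; exact he.neg_right
    · rw [HahnSeries.single_mul_single, add_neg_cancel, one_mul, HahnSeries.single_zero_one]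

/-- **`O(a) ≅ O(b)` on `k((t))` iff `a − b ∈ ℤ ⊆ ℤₚ`.**
For digit sequences `a, b` there exist units `u n` of `k((t))^{pⁿ}` with
`t^{aₙ pⁿ} = uₙ · t^{bₙ pⁿ} · u_{n+1}⁻¹` for all `n` iff the difference of `p`-adic
integers `∑ aₙ pⁿ − ∑ bₙ pⁿ` is a rational integer, i.e. iff there is `m ∈ ℤ` with
`∑_{n<N} (aₙ − bₙ) pⁿ ≡ m (mod p^N)` for all `N`. -/
theorem stratified_line_bundles_isomorphic_iff
    (k : Type*) [Field k] [IsAlgClosed k] (p : ℕ) [CharP k p] (hp : 0 < p)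
    (a b : ℕ → ℕ) (ha : ∀ n, a n < p) (hb : ∀ n, b n < p) :
    (∃ u : ℕ → LaurentSeries k,
        (∀ n, IsUnitLaurentSeriesPow k p n (u n)) ∧
          ∀ n, (tt k) ^ (a n * p ^ n) =
            u n * (tt k) ^ (b n * p ^ n) * (u (n + 1))⁻¹)
      ↔ ∃ m : ℤ, ∀ N : ℕ,
          ((p : ℤ) ^ N) ∣
            (∑ n ∈ Finset.range N, ((a n : ℤ) - (b n : ℤ)) * (p : ℤ) ^ n) - m := by
  set d : ℕ → ℤ := fun N => ∑ n ∈ Finset.range N, ((a n : ℤ) - (b n : ℤ)) * (p : ℤ) ^ n with hd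
  have hdsucc : ∀ n, d (n + 1) = d n + (((a n * p ^ n : ℕ) : ℤ) - ((b n * p ^ n : ℕ) : ℤ)) := by
    intro n
    simp only [hd, Finset.sum_range_succ]
    push_cast
    ring
  constructor
  · rintro ⟨u, hu, heq⟩
    -- u N = u 0 * single (-(d N)) 1
    have key : ∀ N, u N = u 0 * HahnSeries.single (-(d N)) (1 : k) := by
      intro N
      induction N with
      | zero =>
        simp only [hd, Finset.range_zero, Finset.sum_empty, neg_zero,
          HahnSeries.single_zero_one, mul_one]
      | succ n ih =>
        have h := heq n
        rw [tt_pow, tt_pow] at h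
        have hune : u (n + 1) ≠ 0 := by
          intro h0
          rw [h0, inv_zero, mul_zero] at h
          exact HahnSeries.single_ne_zero (one_ne_zero (α := k)) h
        have h3 : HahnSeries.single ((a n * p ^ n : ℕ) : ℤ) (1 : k) * u (n + 1) =
            u n * HahnSeries.single ((b n * p ^ n : ℕ) : ℤ) (1 : k) := by
          rw [h, mul_assoc, inv_mul_cancel₀ hune, mul_one]
        have h2 : u (n + 1) = HahnSeries.single (-((a n * p ^ n : ℕ) : ℤ)) (1 : k) *
            (u n * HahnSeries.single ((b n * p ^ n : ℕ) : ℤ) (1 : k)) := by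
          rw [← h3, ← mul_assoc, HahnSeries.single_mul_single, neg_add_cancel, one_mul,
            HahnSeries.single_zero_one, one_mul]
        rw [h2, ih]
        have h4 : HahnSeries.single (-((a n * p ^ n : ℕ) : ℤ)) (1 : k) *
            (u 0 * HahnSeries.single (-(d n)) (1 : k) *
              HahnSeries.single ((b n * p ^ n : ℕ) : ℤ) (1 : k)) =
            u 0 * (HahnSeries.single (-(d n)) (1 : k) *
              (HahnSeries.single ((b n * p ^ n : ℕ) : ℤ) (1 : k) *
                HahnSeries.single (-((a n * p ^ n : ℕ) : ℤ)) (1 : k))) := by ring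
        rw [h4, HahnSeries.single_mul_single, HahnSeries.single_mul_single, one_mul, one_mul]
        congr 2
        rw [hdsucc n]
        push_cast
        ring
    -- u 0 ≠ 0, take m in its support
    obtain ⟨-, g, -, hg⟩ := hu 0
    have h0 : u 0 ≠ 0 := left_ne_zero_of_mul_eq_one hg
    obtain ⟨m, hm⟩ := HahnSeries.support_nonempty_iff.2 h0
    refine ⟨m, fun N => ?_⟩
    have hmem : (m + (-(d N))) ∈ (u N).support := by
      rw [key N]
      simp only [HahnSeries.mem_support, HahnSeries.coeff_mul_single_add, mul_one]
      exact hm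
    have h5 : ((p : ℤ) ^ N) ∣ -(m + -(d N)) := ((hu N).1 _ hmem).neg_right
    have h6 : -(m + -(d N)) = d N - m := by ring
    rw [h6] at h5
    exact h5
  · rintro ⟨m, hm⟩
    refine ⟨fun N => HahnSeries.single (m - d N) (1 : k), fun N => ?_, fun n => ?_⟩
    · refine single_unit k p N _ ?_
      have := (hm N).neg_right
      simpa [neg_sub] using this
    · rw [tt_pow, tt_pow, single_inv, mul_assoc, HahnSeries.single_mul_single,
        HahnSeries.single_mul_single, one_mul, one_mul]
      congr 1
      rw [hdsucc n]
      ring
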